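/- If F₁ and F₂ are formulas in unit chain expansion (containing no ¬), then F₁⋗F₂ reduces via the ⋗-rewrite rules to some formula in unit chain expansion. -/

import Mathlib

/-- Atomic symbols: literals from `A` together with ⊤ and ⊥. -/
inductive Atom (A : Type) : Type where
  | lit : A → Atom A
  | top : Atom A
  | bot : Atom A

/-- Complement on atoms, induced by a complement map `c` on literals. -/
def Atom.compl {A : Type} (c : A → A) : Atom A → Atom A
  | .lit a => .lit (c a)
  | .top => .bot
  | .bot => .top

/-- Formulas of gradual classical logic. `grad` is the connective ⋗. -/
inductive Fm (A : Type) : Type where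
  | atom : Atom A → Fm A
  | and : Fm A → Fm A → Fm A
  | or : Fm A → Fm A → Fm A
  | neg : Fm A → Fm A
  | grad : Fm A → Fm A → Fm A

/-- One-step rewriting using only the five ⋗-rules (with congruence closure). -/
inductive GStep {A : Type} : Fm A → Fm A → Prop where
  | gradAssoc (F G H) : GStep (.grad (.grad F G) H)
      (.and (.grad F H) (.or (.grad F G) (.grad F (.grad G H))))
  | gradAndL (F G H) : GStep (.grad (.and F G) H) (.and (.grad F H) (.grad G H))
  | gradOrL (F G H) : GStep (.grad (.or F G) H) (.or (.grad F H) (.grad G H))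
  | gradAndR (F G H) : GStep (.grad F (.and G H)) (.and (.grad F G) (.grad F H))
  | gradOrR (F G H) : GStep (.grad F (.or G H)) (.or (.grad F G) (.grad F H))
  | andL {F F'} (G) : GStep F F' → GStep (.and F G) (.and F' G)
  | andR (F) {G G'} : GStep G G' → GStep (.and F G) (.and F G')
  | orL {F F'} (G) : GStep F F' → GStep (.or F G) (.or F' G)
  | orR (F) {G G'} : GStep G G' → GStep (.or F G) (.or F G')
  | negC {F F'} : GStep F F' → GStep (.neg F) (.neg F')
  | gradL {F F'} (G) : GStep F F' → GStep (.grad F G) (.grad F' G)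
  | gradR (F) {G G'} : GStep G G' → GStep (.grad F G) (.grad F G')

/-- One-step rewriting with both the ¬-rules and the ⋗-rules (congruence closure). -/
inductive Step {A : Type} (c : A → A) : Fm A → Fm A → Prop where
  | negAtom (s) : Step c (.neg (.atom s)) (.atom (s.compl c))
  | negAnd (F G) : Step c (.neg (.and F G)) (.or (.neg F) (.neg G))
  | negOr (F G) : Step c (.neg (.or F G)) (.and (.neg F) (.neg G))
  | negGrad (s F) : Step c (.neg (.grad (.atom s) F))
      (.or (.atom (s.compl c)) (.grad (.atom s) (.neg F)))
  | gradAssoc (F G H) : Step c (.grad (.grad F G) H)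
      (.and (.grad F H) (.or (.grad F G) (.grad F (.grad G H))))
  | gradAndL (F G H) : Step c (.grad (.and F G) H) (.and (.grad F H) (.grad G H))
  | gradOrL (F G H) : Step c (.grad (.or F G) H) (.or (.grad F H) (.grad G H))
  | gradAndR (F G H) : Step c (.grad F (.and G H)) (.and (.grad F G) (.grad F H))
  | gradOrR (F G H) : Step c (.grad F (.or G H)) (.or (.grad F G) (.grad F H))
  | andL {F F'} (G) : Step c F F' → Step c (.and F G) (.and F' G)
  | andR (F) {G G'} : Step c G G' → Step c (.and F G) (.and F G')
  | orL {F F'} (G) : Step c F F' → Step c (.or F G) (.or F' G)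
  | orR (F) {G G'} : Step c G G' → Step c (.or F G) (.or F G')
  | negC {F F'} : Step c F F' → Step c (.neg F) (.neg F')
  | gradL {F F'} (G) : Step c F F' → Step c (.grad F G) (.grad F' G)
  | gradR (F) {G G'} : Step c G G' → Step c (.grad F G) (.grad F G')

/-- Reduction: reflexive-transitive closure of one-step rewriting (all rules). -/
def Red {A : Type} (c : A → A) : Fm A → Fm A → Prop :=
  Relation.ReflTransGen (Step c)

/-- Reduction using only the ⋗-rules. -/
def GRed {A : Type} : Fm A → Fm A → Prop :=
  Relation.ReflTransGen GStep

/-- Unit chains (possibly of length one, i.e. a single atom): s₀⋗s₁⋗⋯⋗s_k. -/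
inductive UnitTail {A : Type} : Fm A → Prop where
  | atom (s : Atom A) : UnitTail (.atom s)
  | grad (s : Atom A) {F : Fm A} : UnitTail F → UnitTail (.grad (.atom s) F)

/-- Formulas in unit chain expansion: built from atoms and unit chains via ∧ and ∨;
in particular no ¬ occurs and every ⋗ lies in a unit chain of atoms. -/
inductive UCE {A : Type} : Fm A → Prop where
  | atom (s : Atom A) : UCE (.atom s)
  | and {F G : Fm A} : UCE F → UCE G → UCE (.and F G)
  | or {F G : Fm A} : UCE F → UCE G → UCE (.or F G)
  | chain (s : Atom A) {F : Fm A} : UnitTail F → UCE (.grad (.atom s) F)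

/-- Negation-free formulas. -/
inductive NegFree {A : Type} : Fm A → Prop where
  | atom (s : Atom A) : NegFree (.atom s)
  | and {F G : Fm A} : NegFree F → NegFree G → NegFree (.and F G)
  | or {F G : Fm A} : NegFree F → NegFree G → NegFree (.or F G)
  | grad {F G : Fm A} : NegFree F → NegFree G → NegFree (.grad F G)

/-- A valuation frame: a local interpretation `I` on prefix-sequences and atoms,
subject to the conditions of gradual classical logic.  The global interpretation `J`
is determined by `I` (see `GFrame.valAux`). -/
structure GFrame (A : Type) (c : A → A) : Type where
  I : List (Atom A) → Atom A → Bool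
  I_top : ∀ ψ, I ψ .top = true
  I_bot : ∀ ψ, I ψ .bot = false
  I_compl : ∀ ψ (a : A), (I ψ (.lit a) = false ↔ I ψ (.lit (c a)) = true)
  I_sync : ∀ ψ ψ' s, ψ.length = ψ'.length → I ψ s = I ψ' s

/-- Valuation relative to a prefix ψ.  On a unit chain s₀⋗⋯⋗s_k (with prefix ε)
this computes the global interpretation J(s₀…s_k) = 1 iff every local step is 1;
∧ and ∨ are Boolean. -/
def GFrame.valAux {A : Type} {c : A → A} (M : GFrame A c) :
    List (Atom A) → Fm A → Bool
  | ψ, .atom s => M.I ψ s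
  | ψ, .and F G => M.valAux ψ F && M.valAux ψ G
  | ψ, .or F G => M.valAux ψ F || M.valAux ψ G
  | ψ, .neg F => !(M.valAux ψ F)
  | ψ, .grad (.atom s) G => M.I ψ s && M.valAux (ψ ++ [s]) G
  | _, .grad _ _ => false

/-- The valuation [M ⊨ F]. -/
def GFrame.val {A : Type} {c : A → A} (M : GFrame A c) (F : Fm A) : Bool :=
  M.valAux [] F

/-- Push `s ⋗ ·` through ∧ and ∨ (normalization step of `recursiveReduce`). -/
def gradDist {A : Type} (s : Atom A) : Fm A → Fm A
  | .and F G => .and (gradDist s F) (gradDist s G)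
  | .or F G => .or (gradDist s F) (gradDist s G)
  | F => .grad (.atom s) F

/-- `recursiveReduce`: swap ∧/∨, complement non-chain atoms, and replace a chain
with head s and tail T by s^c ∨ (s ⋗ recursiveReduce T), normalized into unit
chain expansion.  On a unit chain s₀⋗⋯⋗s_k it yields
s₀^c ∨ (s₀⋗s₁^c) ∨ ⋯ ∨ (s₀⋗⋯⋗s_{k−1}⋗s_k^c). -/
def recursiveReduce {A : Type} (c : A → A) : Fm A → Fm A
  | .atom s => .atom (s.compl c)
  | .and F G => .or (recursiveReduce c F) (recursiveReduce c G)
  | .or F G => .and (recursiveReduce c F) (recursiveReduce c G)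
  | .neg F => .neg (recursiveReduce c F)
  | .grad (.atom s) G => .or (.atom (s.compl c)) (gradDist s (recursiveReduce c G))
  | .grad F G => .grad (recursiveReduce c F) (recursiveReduce c G)

namespace Stmt1Aux

theorem gred_andL {A : Type} {F F' G : Fm A} (h : GRed F F') :
    GRed (.and F G) (.and F' G) :=
  Relation.ReflTransGen.lift (fun X => Fm.and X G) (fun _ _ s => GStep.andL G s) _ _ h

theorem gred_andR {A : Type} {F G G' : Fm A} (h : GRed G G') :
    GRed (.and F G) (.and F G') :=
  Relation.ReflTransGen.lift (fun X => Fm.and F X) (fun _ _ s => GStep.andR F s) _ _ h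

theorem gred_orL {A : Type} {F F' G : Fm A} (h : GRed F F') :
    GRed (.or F G) (.or F' G) :=
  Relation.ReflTransGen.lift (fun X => Fm.or X G) (fun _ _ s => GStep.orL G s) _ _ h

theorem gred_orR {A : Type} {F G G' : Fm A} (h : GRed G G') :
    GRed (.or F G) (.or F G') :=
  Relation.ReflTransGen.lift (fun X => Fm.or F X) (fun _ _ s => GStep.orR F s) _ _ h

theorem gred_gradR {A : Type} {F G G' : Fm A} (h : GRed G G') :
    GRed (.grad F G) (.grad F G') :=
  Relation.ReflTransGen.lift (fun X => Fm.grad F X) (fun _ _ s => GStep.gradR F s) _ _ h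

/-- L1: grading an atom against a UCE formula. -/
theorem gradAtom {A : Type} (s : Atom A) {F : Fm A} (h : UCE F) :
    ∃ F' : Fm A, GRed (Fm.grad (.atom s) F) F' ∧ UCE F' := by
  induction h with
  | atom t => exact ⟨_, Relation.ReflTransGen.refl, UCE.chain s (UnitTail.atom t)⟩
  | and hF hG ihF ihG =>
    obtain ⟨F', rF, uF⟩ := ihF
    obtain ⟨G', rG, uG⟩ := ihG
    exact ⟨.and F' G',
      (Relation.ReflTransGen.single (GStep.gradAndR _ _ _)).trans
        ((gred_andL rF).trans (gred_andR rG)), UCE.and uF uG⟩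
  | or hF hG ihF ihG =>
    obtain ⟨F', rF, uF⟩ := ihF
    obtain ⟨G', rG, uG⟩ := ihG
    exact ⟨.or F' G',
      (Relation.ReflTransGen.single (GStep.gradOrR _ _ _)).trans
        ((gred_orL rF).trans (gred_orR rG)), UCE.or uF uG⟩
  | chain t hT =>
    exact ⟨_, Relation.ReflTransGen.refl, UCE.chain s (UnitTail.grad t hT)⟩

/-- L2: grading a unit tail against a unit tail. -/
theorem gradTails {A : Type} {T U : Fm A} (hT : UnitTail T) (hU : UnitTail U) :
    ∃ F' : Fm A, GRed (Fm.grad T U) F' ∧ UCE F' := by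
  induction hT with
  | atom t => exact ⟨_, Relation.ReflTransGen.refl, UCE.chain t hU⟩
  | @grad t T' hT' ih =>
    obtain ⟨F', rF, uF⟩ := ih
    obtain ⟨F'', rF', uF'⟩ := gradAtom t uF
    refine ⟨.and (.grad (.atom t) U) (.or (.grad (.atom t) T') F''),
      (Relation.ReflTransGen.single (GStep.gradAssoc _ _ _)).trans
        (gred_andR (gred_orR ((gred_gradR rF).trans rF'))),
      UCE.and (UCE.chain t hU) (UCE.or (UCE.chain t hT') uF')⟩

/-- Grading a UCE formula against a unit tail. -/
theorem left_tail {A : Type} {F U : Fm A} (h : UCE F) (hU : UnitTail U) :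
    ∃ F' : Fm A, GRed (Fm.grad F U) F' ∧ UCE F' := by
  induction h with
  | atom s => exact gradTails (UnitTail.atom s) hU
  | and hF hG ihF ihG =>
    obtain ⟨F', rF, uF⟩ := ihF
    obtain ⟨G', rG, uG⟩ := ihG
    exact ⟨.and F' G',
      (Relation.ReflTransGen.single (GStep.gradAndL _ _ _)).trans
        ((gred_andL rF).trans (gred_andR rG)), UCE.and uF uG⟩
  | or hF hG ihF ihG =>
    obtain ⟨F', rF, uF⟩ := ihF
    obtain ⟨G', rG, uG⟩ := ihG
    exact ⟨.or F' G',
      (Relation.ReflTransGen.single (GStep.gradOrL _ _ _)).trans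
        ((gred_orL rF).trans (gred_orR rG)), UCE.or uF uG⟩
  | chain s hT => exact gradTails (UnitTail.grad s hT) hU

end Stmt1Aux

/-- If F₁ and F₂ are in unit chain expansion, then F₁⋗F₂ reduces
via the ⋗-rewrite rules to some formula in unit chain expansion. -/
theorem stmt1 {A : Type} {F₁ F₂ : Fm A} (h₁ : UCE F₁) (h₂ : UCE F₂) :
    ∃ F' : Fm A, GRed (Fm.grad F₁ F₂) F' ∧ UCE F' := by
  open Stmt1Aux in
  induction h₂ generalizing F₁ with
  | and hF hG ihF ihG =>
    obtain ⟨F', rF, uF⟩ := ihF h₁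
    obtain ⟨G', rG, uG⟩ := ihG h₁
    exact ⟨.and F' G',
      (Relation.ReflTransGen.single (GStep.gradAndR _ _ _)).trans
        ((gred_andL rF).trans (gred_andR rG)), UCE.and uF uG⟩
  | or hF hG ihF ihG =>
    obtain ⟨F', rF, uF⟩ := ihF h₁
    obtain ⟨G', rG, uG⟩ := ihG h₁
    exact ⟨.or F' G',
      (Relation.ReflTransGen.single (GStep.gradOrR _ _ _)).trans
        ((gred_orL rF).trans (gred_orR rG)), UCE.or uF uG⟩
  | atom s => exact left_tail h₁ (UnitTail.atom s)
  | chain s hT => exact left_tail h₁ (UnitTail.grad s hT)
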